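/- Let C be a centralic category. If morphisms f : X → Y and g : X' → Y admit a cooperator ρ : X × X' → Y, then the kernel equivalence relation of f × g is contained in that of ρ; explicitly, for all morphisms x, x' : S → X and y, y' : S → X', if f ∘ x = f ∘ x' and g ∘ y = g ∘ y', then ρ ∘ ⟨x,y⟩ = ρ ∘ ⟨x',y'⟩. -/

import Mathlib

open CategoryTheory CategoryTheory.Limits

universe v u

/-- A pointed category with binary products is *centralic*. -/
def Centralic (C : Type u) [Category.{v} C] [HasZeroObject C] [HasZeroMorphisms C]
    [HasBinaryProducts C] : Prop :=
  ∀ ⦃X Y Z S : C⦄ (f : X ⨯ Y ⟶ Z) (x x' : S ⟶ X) (y : S ⟶ Y),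
    prod.lift x 0 ≫ f = prod.lift x' 0 ≫ f →
    prod.lift x y ≫ f = prod.lift x' y ≫ f

/-- `ρ : A ⨯ B ⟶ X` is a cooperator for `f : A ⟶ X` and `g : B ⟶ X`. -/
def IsCooperator {C : Type u} [Category.{v} C] [HasZeroObject C] [HasZeroMorphisms C]
    [HasBinaryProducts C] {A B X : C} (f : A ⟶ X) (g : B ⟶ X) (ρ : A ⨯ B ⟶ X) : Prop :=
  prod.lift (𝟙 A) 0 ≫ ρ = f ∧ prod.lift 0 (𝟙 B) ≫ ρ = g

/-- Two morphisms with common codomain commute if they admit a cooperator. -/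
def Commutes {C : Type u} [Category.{v} C] [HasZeroObject C] [HasZeroMorphisms C]
    [HasBinaryProducts C] {A B X : C} (f : A ⟶ X) (g : B ⟶ X) : Prop :=
  ∃ ρ : A ⨯ B ⟶ X, IsCooperator f g ρ

/-- A morphism `f : A ⟶ B` is central if it commutes with `𝟙 B`. -/
def Central {C : Type u} [Category.{v} C] [HasZeroObject C] [HasZeroMorphisms C]
    [HasBinaryProducts C] {A B : C} (f : A ⟶ B) : Prop :=
  Commutes f (𝟙 B)

theorem stmt3 (C : Type u) [Category.{v} C] [HasZeroObject C] [HasZeroMorphisms C]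
    [HasBinaryProducts C] (hC : Centralic C)
    {X X' Y S : C} (f : X ⟶ Y) (g : X' ⟶ Y) (ρ : X ⨯ X' ⟶ Y)
    (hρ : IsCooperator f g ρ)
    (x x' : S ⟶ X) (y y' : S ⟶ X')
    (hf : x ≫ f = x' ≫ f) (hg : y ≫ g = y' ≫ g) :
    prod.lift x y ≫ ρ = prod.lift x' y' ≫ ρ := by
  obtain ⟨h1, h2⟩ := hρ
  have key1 : ∀ (z : S ⟶ X), prod.lift z (0 : S ⟶ X') ≫ ρ = z ≫ f := by
    intro z
    rw [← h1, ← Category.assoc]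
    congr 1
    ext <;> simp
  have key2 : ∀ (z : S ⟶ X'), prod.lift (0 : S ⟶ X) z ≫ ρ = z ≫ g := by
    intro z
    rw [← h2, ← Category.assoc]
    congr 1
    ext <;> simp
  have step1 : prod.lift x y ≫ ρ = prod.lift x' y ≫ ρ := by
    apply hC ρ x x' y
    rw [key1, key1, hf]
  have step2 : prod.lift x' y ≫ ρ = prod.lift x' y' ≫ ρ := by
    have := hC ((prod.braiding X' X).hom ≫ ρ) y y' x' ?_
    · have e1 : prod.lift y x' ≫ (prod.braiding X' X).hom = prod.lift x' y := by
        ext <;> simp [prod.lift_fst, prod.lift_snd]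
      have e2 : prod.lift y' x' ≫ (prod.braiding X' X).hom = prod.lift x' y' := by
        ext <;> simp [prod.lift_fst, prod.lift_snd]
      rw [← Category.assoc, e1, ← Category.assoc, e2] at this
      exact this
    · have e1 : prod.lift y (0 : S ⟶ X) ≫ (prod.braiding X' X).hom = prod.lift 0 y := by
        ext <;> simp [prod.lift_fst, prod.lift_snd]
      have e2 : prod.lift y' (0 : S ⟶ X) ≫ (prod.braiding X' X).hom = prod.lift 0 y' := by
        ext <;> simp [prod.lift_fst, prod.lift_snd]
      rw [← Category.assoc, e1, ← Category.assoc, e2, key2, key2, hg]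
  rw [step1, step2]
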